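/- arXiv:1507.01316 — 4 statements merged into one kernel-verified Lean document; each statement's English description precedes it below -/
import Mathlib

section
/- Fix reals θ > 0, η > 0, V > 0, ξ > 0, Q > 0 and E_b ≥ 0, define F(R) = V·ξ·max(η(e^{θR} − 1) − E_b, 0) − Q·R, R_th = (1/θ)·ln(E_b/η + 1) and R_s = (1/θ)·ln(Q/(θ·V·η·ξ)). If R_th < R_s ≤ Q, then R_s minimizes F over [R_th, Q] and F(R_s) < −Q·R_th; in particular R_s is the unique minimizer of F over [0, Q]. -/
/-- Interior-stationary-point case of the BGL rate rule: if `R_th < R_s ≤ Q`,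
then `R_s` minimizes `F` over `[R_th, Q]`, `F(R_s) < -Q·R_th`, and `R_s` is the
unique minimizer of `F` over `[0, Q]`. -/
theorem BGL_interior_case (θ η V ξ Q Eb : ℝ)
    (hθ : 0 < θ) (hη : 0 < η) (hV : 0 < V) (hξ : 0 < ξ) (hQ : 0 < Q) (hEb : 0 ≤ Eb)
    (F : ℝ → ℝ)
    (hF : F = fun R : ℝ => V * ξ * max (η * (Real.exp (θ * R) - 1) - Eb) 0 - Q * R)
    (Rth : ℝ) (hRth : Rth = (1 / θ) * Real.log (Eb / η + 1))
    (Rs : ℝ) (hRs : Rs = (1 / θ) * Real.log (Q / (θ * V * η * ξ)))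
    (hlt : Rth < Rs) (hle : Rs ≤ Q) :
    (∀ R ∈ Set.Icc Rth Q, F Rs ≤ F R) ∧
    F Rs < -(Q * Rth) ∧
    (∀ R ∈ Set.Icc (0 : ℝ) Q, R ≠ Rs → F Rs < F R) := by
  have hθne : θ ≠ 0 := hθ.ne'
  have hEη1 : (0:ℝ) < Eb / η + 1 := by positivity
  have hexpRth : Real.exp (θ * Rth) = Eb / η + 1 := by
    rw [hRth, show θ * (1 / θ * Real.log (Eb / η + 1)) = Real.log (Eb / η + 1) by
      field_simp]
    exact Real.exp_log hEη1
  have hexpRs : Real.exp (θ * Rs) = Q / (θ * V * η * ξ) := by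
    rw [hRs, show θ * (1 / θ * Real.log (Q / (θ * V * η * ξ)))
        = Real.log (Q / (θ * V * η * ξ)) by field_simp]
    exact Real.exp_log (by positivity)
  have hQeq : θ * V * η * ξ * Real.exp (θ * Rs) = Q := by
    rw [hexpRs]; field_simp
  have hRth0 : 0 ≤ Rth := by
    rw [hRth]
    apply mul_nonneg (by positivity)
    apply Real.log_nonneg
    have : 0 ≤ Eb / η := div_nonneg hEb hη.le
    linarith
  have hEbeq : η * (Real.exp (θ * Rth) - 1) - Eb = 0 := by
    rw [hexpRth]; field_simp; ring
  have hFge : ∀ R, Rth ≤ R →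
      F R = V * ξ * (η * (Real.exp (θ * R) - 1) - Eb) - Q * R := by
    intro R hR
    rw [hF]; simp only
    congr 2
    apply max_eq_left
    have h := Real.exp_le_exp.mpr (mul_le_mul_of_nonneg_left hR hθ.le)
    nlinarith
  have hFle : ∀ R, R ≤ Rth → F R = -(Q * R) := by
    intro R hR
    rw [hF]; simp only
    have h := Real.exp_le_exp.mpr (mul_le_mul_of_nonneg_left hR hθ.le)
    have : η * (Real.exp (θ * R) - 1) - Eb ≤ 0 := by nlinarith
    rw [max_eq_right this]; ring
  have hdiff : ∀ R, Rth ≤ R → F R - F Rs =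
      V * ξ * η * Real.exp (θ * Rs) *
        (Real.exp (θ * (R - Rs)) - 1 - θ * (R - Rs)) := by
    intro R hR
    rw [hFge R hR, hFge Rs hlt.le]
    have h1 : Real.exp (θ * R) = Real.exp (θ * Rs) * Real.exp (θ * (R - Rs)) := by
      rw [← Real.exp_add]; ring_nf
    rw [h1]
    linear_combination (R - Rs) * hQeq
  have hcoef : 0 < V * ξ * η * Real.exp (θ * Rs) := by positivity
  have hmin : ∀ R, Rth ≤ R → F Rs ≤ F R := by
    intro R hR
    have hexp := Real.add_one_le_exp (θ * (R - Rs))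
    nlinarith [hdiff R hR]
  have hstrict : ∀ R, Rth ≤ R → R ≠ Rs → F Rs < F R := by
    intro R hR hne
    have hx : θ * (R - Rs) ≠ 0 := by
      intro h
      apply hne
      have : R - Rs = 0 := by
        rcases mul_eq_zero.mp h with h' | h'
        · exact absurd h' hθne
        · exact h'
      linarith
    have hexp := Real.add_one_lt_exp hx
    nlinarith [hdiff R hR]
  have hFRth : F Rth = -(Q * Rth) := hFle Rth le_rfl
  have h2 : F Rs < -(Q * Rth) := by
    rw [← hFRth]
    exact hstrict Rth le_rfl hlt.ne
  refine ⟨fun R hR => hmin R hR.1, h2, ?_⟩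
  intro R hR hne
  rcases le_or_gt R Rth with h | h
  · rw [hFle R h]
    have : -(Q * Rth) ≤ -(Q * R) := by nlinarith [hR.1]
    linarith
  · exact hstrict R h.le hne
end

section
/- Fix reals θ > 0, η > 0, V > 0, ξ > 0, Q > 0 and E_b ≥ 0, define F(R) = V·ξ·max(η(e^{θR} − 1) − E_b, 0) − Q·R, R_th = (1/θ)·ln(E_b/η + 1) and R_s = (1/θ)·ln(Q/(θ·V·η·ξ)). If R_s < R_th < Q, then for every R ∈ [0, Q] one has F(R) ≥ F(R_th) = −Q·R_th; that is, R_th minimizes F over [0, Q]. -/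
/-- Cost-dominated case of the BGL rate rule: if `R_s < R_th < Q`, then `R_th`
minimizes `F` over `[0, Q]`, with `F(R_th) = -Q·R_th`. -/
theorem BGL_cost_dominated_case (θ η V ξ Q Eb : ℝ)
    (hθ : 0 < θ) (hη : 0 < η) (hV : 0 < V) (hξ : 0 < ξ) (hQ : 0 < Q) (hEb : 0 ≤ Eb)
    (F : ℝ → ℝ)
    (hF : F = fun R : ℝ => V * ξ * max (η * (Real.exp (θ * R) - 1) - Eb) 0 - Q * R)
    (Rth : ℝ) (hRth : Rth = (1 / θ) * Real.log (Eb / η + 1))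
    (Rs : ℝ) (hRs : Rs = (1 / θ) * Real.log (Q / (θ * V * η * ξ)))
    (h1 : Rs < Rth) (h2 : Rth < Q) :
    (∀ R ∈ Set.Icc (0 : ℝ) Q, F Rth ≤ F R) ∧ F Rth = -(Q * Rth) := by
  have hy : (0:ℝ) < Eb / η + 1 := by positivity
  have hexp : Real.exp (θ * Rth) = Eb / η + 1 := by
    rw [hRth, ← mul_assoc, mul_one_div_cancel hθ.ne', one_mul, Real.exp_log hy]
  have hzero : η * (Eb / η + 1 - 1) - Eb = 0 := by field_simp; ring
  have hFRth : F Rth = -(Q * Rth) := by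
    rw [hF]; simp only; rw [hexp, hzero]; simp
  refine ⟨?_, hFRth⟩
  intro R hR
  rw [hFRth, hF]; simp only
  rcases le_or_gt R Rth with hle | hgt
  · have hb : Real.exp (θ * R) ≤ Eb / η + 1 := by
      rw [← hexp]; exact Real.exp_le_exp.mpr (by nlinarith)
    have hneg : η * (Real.exp (θ * R) - 1) - Eb ≤ 0 := by nlinarith
    rw [max_eq_right hneg]
    nlinarith
  · have hx : (0:ℝ) < Q / (θ * V * η * ξ) := by positivity
    have hd : (0:ℝ) < θ * V * η * ξ := by positivity
    have hlog : Real.log (Q / (θ * V * η * ξ)) < Real.log (Eb / η + 1) := by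
      rw [hRs, hRth] at h1
      have h1θ : (0:ℝ) < 1 / θ := by positivity
      exact lt_of_mul_lt_mul_left h1 h1θ.le
    have hxy : Q / (θ * V * η * ξ) < Eb / η + 1 :=
      (Real.log_lt_log_iff hx hy).mp hlog
    have hkey : Q < θ * V * ξ * (Eb + η) := by
      have heq : θ * V * η * ξ * (Q / (θ * V * η * ξ)) = Q := by field_simp
      have h3 := mul_lt_mul_of_pos_left hxy hd
      have h4 : θ * V * η * ξ * (Eb / η + 1) = θ * V * ξ * (Eb + η) := by
        field_simp
      linarith
    have hconv : (Eb / η + 1) * (θ * (R - Rth) + 1) ≤ Real.exp (θ * R) := by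
      have h1' := Real.add_one_le_exp (θ * (R - Rth))
      have hsplit : Real.exp (θ * R) = Real.exp (θ * Rth) * Real.exp (θ * (R - Rth)) := by
        rw [← Real.exp_add]; ring_nf
      rw [hsplit, hexp]
      nlinarith
    have hmax : η * (Real.exp (θ * R) - 1) - Eb ≤ max (η * (Real.exp (θ * R) - 1) - Eb) 0 :=
      le_max_left _ _
    have hc2 : (Eb + η) * (θ * (R - Rth) + 1) ≤ η * Real.exp (θ * R) := by
      have := mul_le_mul_of_nonneg_left hconv hη.le
      calc (Eb + η) * (θ * (R - Rth) + 1) = η * ((Eb / η + 1) * (θ * (R - Rth) + 1)) := by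
            field_simp
        _ ≤ η * Real.exp (θ * R) := this
    have hVξ : (0:ℝ) < V * ξ := by positivity
    nlinarith [mul_le_mul_of_nonneg_left hc2 hVξ.le, mul_le_mul_of_nonneg_left hmax hVξ.le,
      mul_pos hVξ (mul_pos hθ (sub_pos.mpr hgt)), mul_le_mul_of_nonneg_right hkey.le (sub_pos.mpr hgt).le]
end

section
/- Fix reals θ > 0, η > 0, V > 0, ξ > 0, Q > 0 and E_b ≥ 0, define F(R) = V·ξ·max(η(e^{θR} − 1) − E_b, 0) − Q·R, R_th = (1/θ)·ln(E_b/η + 1) and R_s = (1/θ)·ln(Q/(θ·V·η·ξ)). If R_th < Q < R_s, then for every R ∈ [0, Q] one has F(R) ≥ F(Q) = V·ξ·(η(e^{θQ} − 1) − E_b) − Q², and moreover F(Q) < −Q·R_th; that is, R = Q is the minimizer of F over [0, Q]. -/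
/-- Delay-dominated case of the BGL rate rule: if `R_th < Q < R_s`, then `R = Q`
minimizes `F` over `[0, Q]`, with `F(Q) = Vξ(η(e^{θQ} - 1) - E_b) - Q²`, and
`F(Q) < -Q·R_th`. -/
theorem BGL_delay_dominated_case (θ η V ξ Q Eb : ℝ)
    (hθ : 0 < θ) (hη : 0 < η) (hV : 0 < V) (hξ : 0 < ξ) (hQ : 0 < Q) (hEb : 0 ≤ Eb)
    (F : ℝ → ℝ)
    (hF : F = fun R : ℝ => V * ξ * max (η * (Real.exp (θ * R) - 1) - Eb) 0 - Q * R)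
    (Rth : ℝ) (hRth : Rth = (1 / θ) * Real.log (Eb / η + 1))
    (Rs : ℝ) (hRs : Rs = (1 / θ) * Real.log (Q / (θ * V * η * ξ)))
    (h1 : Rth < Q) (h2 : Q < Rs) :
    (∀ R ∈ Set.Icc (0 : ℝ) Q, F Q ≤ F R) ∧
    F Q = V * ξ * (η * (Real.exp (θ * Q) - 1) - Eb) - Q ^ 2 ∧
    F Q < -(Q * Rth) := by
  have hc : 0 < θ * V * η * ξ := by positivity
  -- key inequality from Q < Rs
  have hQc : 0 < Q / (θ * V * η * ξ) := by positivity
  have key : θ * V * η * ξ * Real.exp (θ * Q) < Q := by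
    have hlog : θ * Q < Real.log (Q / (θ * V * η * ξ)) := by
      have := h2
      rw [hRs] at this
      calc θ * Q < θ * ((1 / θ) * Real.log (Q / (θ * V * η * ξ))) :=
            by exact (mul_lt_mul_iff_right₀ hθ).2 this
        _ = Real.log (Q / (θ * V * η * ξ)) := by field_simp
    have := Real.exp_lt_exp.2 hlog
    rw [Real.exp_log hQc] at this
    calc θ * V * η * ξ * Real.exp (θ * Q) < θ * V * η * ξ * (Q / (θ * V * η * ξ)) :=
          (mul_lt_mul_iff_right₀ hc).2 this
      _ = Q := by field_simp
  -- exp(θ Rth) = Eb/η + 1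
  have hpos : (0:ℝ) < Eb / η + 1 := by positivity
  have hexpRth : Real.exp (θ * Rth) = Eb / η + 1 := by
    rw [hRth]
    rw [show θ * ((1/θ) * Real.log (Eb/η + 1)) = Real.log (Eb/η + 1) by field_simp]
    exact Real.exp_log hpos
  -- Eb < η (e^{θQ} - 1)
  have hEbQ : Eb < η * (Real.exp (θ * Q) - 1) := by
    have : Real.exp (θ * Rth) < Real.exp (θ * Q) :=
      Real.exp_lt_exp.2 ((mul_lt_mul_iff_right₀ hθ).2 h1)
    rw [hexpRth] at this
    have h' : Eb / η < Real.exp (θ * Q) - 1 := by linarith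
    have h'' := (div_lt_iff₀ hη).1 h'
    nlinarith [h'']
  -- monotonicity step: for R ≤ Q, G(Q) ≤ G(R), strict if R < Q
  have Gstep : ∀ R : ℝ, R ≤ Q →
      V * ξ * (η * (Real.exp (θ * Q) - 1) - Eb) - Q * Q ≤
      V * ξ * (η * (Real.exp (θ * R) - 1) - Eb) - Q * R := by
    intro R hR
    have hconv : Real.exp (θ * Q) - Real.exp (θ * R) ≤
        Real.exp (θ * Q) * (θ * (Q - R)) := by
      have h := Real.add_one_le_exp (θ * R - θ * Q)
      have hx : Real.exp (θ * R) = Real.exp (θ * Q) * Real.exp (θ * R - θ * Q) := by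
        rw [← Real.exp_add]; ring_nf
      nlinarith [Real.exp_pos (θ * Q), h, hx]
    have hexp : 0 < Real.exp (θ * Q) := Real.exp_pos _
    nlinarith [mul_nonneg (sub_nonneg.2 hR) (le_of_lt (sub_pos.2 key)),
      mul_le_mul_of_nonneg_left hconv (le_of_lt (by positivity : (0:ℝ) < V * ξ * η))]
  have GstepStrict : ∀ R : ℝ, R < Q →
      V * ξ * (η * (Real.exp (θ * Q) - 1) - Eb) - Q * Q <
      V * ξ * (η * (Real.exp (θ * R) - 1) - Eb) - Q * R := by
    intro R hR
    have hconv : Real.exp (θ * Q) - Real.exp (θ * R) ≤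
        Real.exp (θ * Q) * (θ * (Q - R)) := by
      have h := Real.add_one_le_exp (θ * R - θ * Q)
      have hx : Real.exp (θ * R) = Real.exp (θ * Q) * Real.exp (θ * R - θ * Q) := by
        rw [← Real.exp_add]; ring_nf
      nlinarith [Real.exp_pos (θ * Q), h, hx]
    have hexp : 0 < Real.exp (θ * Q) := Real.exp_pos _
    nlinarith [mul_pos (sub_pos.2 hR) (sub_pos.2 key),
      mul_le_mul_of_nonneg_left hconv (le_of_lt (by positivity : (0:ℝ) < V * ξ * η))]
  have hFQ : F Q = V * ξ * (η * (Real.exp (θ * Q) - 1) - Eb) - Q ^ 2 := by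
    rw [hF]
    simp only
    rw [max_eq_left (le_of_lt (sub_pos.2 hEbQ))]
    ring
  refine ⟨?_, hFQ, ?_⟩
  · intro R hRmem
    rw [hF]; simp only
    rw [max_eq_left (le_of_lt (sub_pos.2 hEbQ))]
    have h3 := Gstep R hRmem.2
    have h4 : V * ξ * (η * (Real.exp (θ * R) - 1) - Eb) ≤
        V * ξ * max (η * (Real.exp (θ * R) - 1) - Eb) 0 := by
      have := le_max_left (η * (Real.exp (θ * R) - 1) - Eb) 0
      nlinarith [mul_pos hV hξ]
    linarith
  · rw [hFQ]
    have h5 := GstepStrict Rth h1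
    have h6 : η * (Real.exp (θ * Rth) - 1) - Eb = 0 := by
      rw [hexpRth]; field_simp; ring
    rw [h6] at h5
    nlinarith [h5]
end

section
/- Fix reals θ > 0, η > 0, V > 0, ξ > 0, Q > 0 and E_b ≥ 0, define F(R) = V·ξ·max(η(e^{θR} − 1) − E_b, 0) − Q·R on [0, Q], R_th = (1/θ)·ln(E_b/η + 1) and R_s = (1/θ)·ln(Q/(θ·V·η·ξ)). Define R* as follows: if R_th ≥ Q then R* = Q; otherwise R* = R_s if R_th ≤ R_s ≤ Q, R* = R_th if R_s < R_th, and R* = Q if R_s > Q. Then R* ∈ [0, Q] and F(R*) ≤ F(R) for every R ∈ [0, Q]; that is, R* is a global minimizer of the per-period Lyapunov objective over the feasible rates [0, Q]. -/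
set_option maxHeartbeats 1000000


/-- Equation (20) of the paper: the complete rate rule of the BGL algorithm
selects a global minimizer `R*` of the per-period Lyapunov objective over the
feasible rates `[0, Q]`. -/
theorem BGL_rate_rule_optimal (θ η V ξ Q Eb : ℝ)
    (hθ : 0 < θ) (hη : 0 < η) (hV : 0 < V) (hξ : 0 < ξ) (hQ : 0 < Q) (hEb : 0 ≤ Eb)
    (F : ℝ → ℝ)
    (hF : F = fun R : ℝ => V * ξ * max (η * (Real.exp (θ * R) - 1) - Eb) 0 - Q * R)
    (Rth : ℝ) (hRth : Rth = (1 / θ) * Real.log (Eb / η + 1))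
    (Rs : ℝ) (hRs : Rs = (1 / θ) * Real.log (Q / (θ * V * η * ξ)))
    (Rstar : ℝ)
    (hRstar : Rstar =
      if Q ≤ Rth then Q
      else if Rth ≤ Rs ∧ Rs ≤ Q then Rs
      else if Rs < Rth then Rth
      else Q) :
    Rstar ∈ Set.Icc (0 : ℝ) Q ∧ ∀ R ∈ Set.Icc (0 : ℝ) Q, F Rstar ≤ F R := by
  set G : ℝ → ℝ := fun R => V * ξ * (η * (Real.exp (θ * R) - 1) - Eb) - Q * R with hG
  have hexpth : Real.exp (θ * Rth) = Eb / η + 1 := by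
    rw [hRth, show θ * (1 / θ * Real.log (Eb / η + 1)) = Real.log (Eb / η + 1) by
      field_simp]
    exact Real.exp_log (by positivity)
  have hexps : Real.exp (θ * Rs) = Q / (θ * V * η * ξ) := by
    rw [hRs, show θ * (1 / θ * Real.log (Q / (θ * V * η * ξ))) =
      Real.log (Q / (θ * V * η * ξ)) by field_simp]
    exact Real.exp_log (by positivity)
  have hQs : V * ξ * η * θ * (Q / (θ * V * η * ξ)) = Q := by field_simp
  have hRth0 : 0 ≤ Rth := by
    rw [hRth]
    have : (0:ℝ) ≤ Real.log (Eb / η + 1) := Real.log_nonneg (by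
      have : 0 ≤ Eb / η := by positivity
      linarith)
    positivity
  -- F equals -Q*R on [0, Rth]
  have hFleft : ∀ R, R ≤ Rth → F R = -(Q * R) := by
    intro R hR
    have h1 : Real.exp (θ * R) ≤ Eb / η + 1 := by
      rw [← hexpth]
      exact Real.exp_le_exp.2 (by nlinarith)
    have h2 : η * (Real.exp (θ * R) - 1) - Eb ≤ 0 := by
      have := mul_le_mul_of_nonneg_left h1 hη.le
      have hEη : η * (Eb / η) = Eb := by field_simp
      nlinarith
    rw [hF]; simp only [max_eq_right h2]; ring
  -- F equals G on [Rth, ∞)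
  have hFright : ∀ R, Rth ≤ R → F R = G R := by
    intro R hR
    have h1 : Eb / η + 1 ≤ Real.exp (θ * R) := by
      rw [← hexpth]
      exact Real.exp_le_exp.2 (by nlinarith)
    have h2 : 0 ≤ η * (Real.exp (θ * R) - 1) - Eb := by
      have := mul_le_mul_of_nonneg_left h1 hη.le
      have hEη : η * (Eb / η) = Eb := by field_simp
      nlinarith
    rw [hF, hG]; simp only [max_eq_left h2]
  have hGth : G Rth = -(Q * Rth) := by
    have hEη : η * (Eb / η) = Eb := by field_simp
    rw [hG]; simp only; rw [hexpth]
    have h0 : η * (Eb / η + 1 - 1) - Eb = 0 := by field_simp; ring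
    rw [h0]; ring
  -- monotonicity of G right of Rs
  have mono : ∀ a b, Rs ≤ a → a ≤ b → G a ≤ G b := by
    intro a b ha hab
    have hkey : Real.exp (θ * a) * (θ * (b - a)) ≤ Real.exp (θ * b) - Real.exp (θ * a) := by
      have h := Real.add_one_le_exp (θ * (b - a))
      have he : Real.exp (θ * b) = Real.exp (θ * a) * Real.exp (θ * (b - a)) := by
        rw [← Real.exp_add]; ring_nf
      nlinarith [Real.exp_pos (θ * a)]
    have hge : Q / (θ * V * η * ξ) ≤ Real.exp (θ * a) := by
      rw [← hexps]; exact Real.exp_le_exp.2 (by nlinarith)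
    simp only [hG]
    have hba : (0:ℝ) ≤ b - a := by linarith
    have p1 := mul_le_mul_of_nonneg_left hkey (by positivity : (0:ℝ) ≤ V * ξ * η)
    have p2 := mul_le_mul_of_nonneg_left
      (mul_le_mul_of_nonneg_right hge (mul_nonneg hθ.le hba))
      (by positivity : (0:ℝ) ≤ V * ξ * η)
    nlinarith [p1, p2, hQs, hba]
  -- antitonicity of G left of Rs
  have anti : ∀ a b, a ≤ b → b ≤ Rs → G b ≤ G a := by
    intro a b hab hb
    have hkey : Real.exp (θ * b) - Real.exp (θ * a) ≤ Real.exp (θ * b) * (θ * (b - a)) := by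
      have h := Real.add_one_le_exp (θ * (a - b))
      have he : Real.exp (θ * a) = Real.exp (θ * b) * Real.exp (θ * (a - b)) := by
        rw [← Real.exp_add]; ring_nf
      nlinarith [Real.exp_pos (θ * b)]
    have hle : Real.exp (θ * b) ≤ Q / (θ * V * η * ξ) := by
      rw [← hexps]; exact Real.exp_le_exp.2 (by nlinarith)
    simp only [hG]
    have hba : (0:ℝ) ≤ b - a := by linarith
    have p1 := mul_le_mul_of_nonneg_left hkey (by positivity : (0:ℝ) ≤ V * ξ * η)
    have p2 := mul_le_mul_of_nonneg_left
      (mul_le_mul_of_nonneg_right hle (mul_nonneg hθ.le hba))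
      (by positivity : (0:ℝ) ≤ V * ξ * η)
    nlinarith [p1, p2, hQs, hba]
  by_cases h1 : Q ≤ Rth
  · rw [hRstar, if_pos h1]
    refine ⟨⟨hQ.le, le_refl Q⟩, ?_⟩
    intro R ⟨hR0, hRQ⟩
    rw [hFleft Q h1, hFleft R (le_trans hRQ h1)]
    nlinarith
  · push_neg at h1
    rw [hRstar, if_neg (not_le.2 h1)]
    by_cases h2 : Rth ≤ Rs ∧ Rs ≤ Q
    · rw [if_pos h2]
      obtain ⟨h2a, h2b⟩ := h2
      refine ⟨⟨le_trans hRth0 h2a, h2b⟩, ?_⟩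
      intro R ⟨hR0, hRQ⟩
      have hFRs : F Rs = G Rs := hFright Rs h2a
      by_cases hR : R ≤ Rth
      · rw [hFleft R hR, hFRs]
        have := anti Rth Rs h2a (le_refl Rs)
        rw [hGth] at this
        nlinarith
      · push_neg at hR
        rw [hFright R hR.le, hFRs]
        rcases le_total R Rs with h | h
        · exact anti R Rs h (le_refl Rs)
        · exact mono Rs R (le_refl Rs) h
    · rw [if_neg h2]
      by_cases h3 : Rs < Rth
      · rw [if_pos h3]
        refine ⟨⟨hRth0, h1.le⟩, ?_⟩
        intro R ⟨hR0, hRQ⟩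
        rw [hFright Rth (le_refl Rth), hGth]
        by_cases hR : R ≤ Rth
        · rw [hFleft R hR]; nlinarith
        · push_neg at hR
          rw [hFright R hR.le]
          have := mono Rth R h3.le hR.le
          rw [hGth] at this
          linarith
      · rw [if_neg h3]
        push_neg at h3
        have hQRs : Q < Rs := by
          rcases not_and_or.1 h2 with h | h
          · exact absurd h3 (not_le.2 (lt_of_not_ge h))
          · exact lt_of_not_ge h
        refine ⟨⟨hQ.le, le_refl Q⟩, ?_⟩
        intro R ⟨hR0, hRQ⟩
        have hFQ : F Q = G Q := hFright Q h1.le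
        by_cases hR : R ≤ Rth
        · rw [hFleft R hR, hFQ]
          have := anti Rth Q h1.le hQRs.le
          rw [hGth] at this
          nlinarith
        · push_neg at hR
          rw [hFright R hR.le, hFQ]
          exact anti R Q hRQ hQRs.le
end
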